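/- For every nonzero vector z ∈ ℝⁿ, one has zᵀA B⁻¹A z − (zᵀAz)²/(zᵀBz) ≤ (ν_max − ν_min)·(zᵀAz); equivalently, min over α ∈ ℝ of ‖B⁻¹(A − αB)z‖_B is at most √(ν_max − ν_min)·‖z‖_A, where the minimum over α of ‖B⁻¹Az − αz‖²_B equals zᵀAB⁻¹Az − (zᵀAz)²/(zᵀBz). -/

import Mathlib

open Matrix

set_option maxHeartbeats 1000000 in
/-- Bound on the best B-norm approximation of B⁻¹Az in the direction z. -/
theorem statement_7 {n : ℕ}
    (A B : Matrix (Fin n) (Fin n) ℝ)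
    (hA : A.PosDef) (hB : B.PosDef)
    (νmin νmax : ℝ) (hνmin : 0 < νmin) (hνmax : 0 < νmax)
    (hν : ∀ z, νmin * (z ⬝ᵥ B *ᵥ z) ≤ z ⬝ᵥ A *ᵥ z ∧ z ⬝ᵥ A *ᵥ z ≤ νmax * (z ⬝ᵥ B *ᵥ z))
    (z : Fin n → ℝ) (hz : z ≠ 0) :
    z ⬝ᵥ (A * B⁻¹ * A) *ᵥ z - (z ⬝ᵥ A *ᵥ z) ^ 2 / (z ⬝ᵥ B *ᵥ z)
        ≤ (νmax - νmin) * (z ⬝ᵥ A *ᵥ z) ∧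
      (⨅ α : ℝ, Real.sqrt ((B⁻¹ *ᵥ ((A - α • B) *ᵥ z)) ⬝ᵥ B *ᵥ (B⁻¹ *ᵥ ((A - α • B) *ᵥ z))))
        ≤ Real.sqrt (νmax - νmin) * Real.sqrt (z ⬝ᵥ A *ᵥ z) ∧
      (⨅ α : ℝ, (B⁻¹ *ᵥ (A *ᵥ z) - α • z) ⬝ᵥ B *ᵥ (B⁻¹ *ᵥ (A *ᵥ z) - α • z))
        = z ⬝ᵥ (A * B⁻¹ * A) *ᵥ z - (z ⬝ᵥ A *ᵥ z) ^ 2 / (z ⬝ᵥ B *ᵥ z) := by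
  have hdet : IsUnit B.det := isUnit_iff_ne_zero.mpr hB.det_pos.ne'
  have hBT : Bᵀ = B := hB.1
  have hAT : Aᵀ = A := hA.1
  have symB : ∀ x y : Fin n → ℝ, x ⬝ᵥ B *ᵥ y = y ⬝ᵥ B *ᵥ x := fun x y => by
    rw [dotProduct_mulVec, ← mulVec_transpose, hBT, dotProduct_comm]
  have symA : ∀ x y : Fin n → ℝ, x ⬝ᵥ A *ᵥ y = y ⬝ᵥ A *ᵥ x := fun x y => by
    rw [dotProduct_mulVec, ← mulVec_transpose, hAT, dotProduct_comm]
  set w : Fin n → ℝ := B⁻¹ *ᵥ (A *ᵥ z) with hw_def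
  set a : ℝ := z ⬝ᵥ A *ᵥ z with ha_def
  set b : ℝ := z ⬝ᵥ B *ᵥ z with hb_def
  set c : ℝ := z ⬝ᵥ (A * B⁻¹ * A) *ᵥ z with hc_def
  have hBw : B *ᵥ w = A *ᵥ z := by
    rw [hw_def, mulVec_mulVec, mulVec_mulVec, mul_nonsing_inv B hdet, one_mul]
  have ha : 0 < a := by simpa using hA.dotProduct_mulVec_pos hz
  have hb : 0 < b := by simpa using hB.dotProduct_mulVec_pos hz
  have hzBw : z ⬝ᵥ B *ᵥ w = a := by rw [hBw]
  have hwBz : w ⬝ᵥ B *ᵥ z = a := by rw [symB, hzBw]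
  have hzAw : z ⬝ᵥ A *ᵥ w = c := by
    rw [hc_def, ← mulVec_mulVec, ← mulVec_mulVec]
  have hwAz : w ⬝ᵥ A *ᵥ z = c := by rw [symA, hzAw]
  have hwBw : w ⬝ᵥ B *ᵥ w = c := by rw [symB, hBw, hwAz]
  have hνab := hν z
  rw [← ha_def, ← hb_def] at hνab
  have hνlt : νmin ≤ νmax := by nlinarith [hνab.1, hνab.2]
  -- the quadratic
  have hq : ∀ α : ℝ, (w - α • z) ⬝ᵥ B *ᵥ (w - α • z) = c - 2*α*a + α^2*b := fun α => by
    simp only [mulVec_sub, mulVec_smul, sub_dotProduct, dotProduct_sub, smul_dotProduct,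
      dotProduct_smul, smul_eq_mul, hzBw, hwBz, hwBw, ← hb_def]
    ring
  -- the key inequality
  set E : ℝ := c * b - a^2 with hE_def
  set u : Fin n → ℝ := b • w - a • z with hu_def
  have hzBu : z ⬝ᵥ B *ᵥ u = 0 := by
    simp only [hu_def, mulVec_sub, mulVec_smul, dotProduct_sub, dotProduct_smul,
      smul_eq_mul, hzBw, ← hb_def]
    ring
  have huBz : u ⬝ᵥ B *ᵥ z = 0 := by rw [symB, hzBu]
  have huBu : u ⬝ᵥ B *ᵥ u = b * E := by
    simp only [hu_def, mulVec_sub, mulVec_smul, sub_dotProduct, dotProduct_sub,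
      smul_dotProduct, dotProduct_smul, smul_eq_mul, hzBw, hwBz, hwBw, ← hb_def, hE_def]
    ring
  have hzAu : z ⬝ᵥ A *ᵥ u = E := by
    simp only [hu_def, mulVec_sub, mulVec_smul, dotProduct_sub, dotProduct_smul,
      smul_eq_mul, hzAw, ← ha_def, hE_def]
    ring
  have huAz : u ⬝ᵥ A *ᵥ z = E := by rw [symA, hzAu]
  have hE0 : 0 ≤ E := by
    have := hB.posSemidef.dotProduct_mulVec_nonneg u
    rw [star_trivial, huBu] at this
    nlinarith
  have huA : u ⬝ᵥ A *ᵥ u ≤ νmax * (b * E) := by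
    have := (hν u).2
    rwa [huBu] at this
  have K : ∀ σ : ℝ, 2*σ*E ≤ (a - νmin*b) + σ^2*((νmax-νmin)*(b*E)) := by
    intro σ
    have h1 := (hν (z - σ • u)).1
    have hBform : (z - σ • u) ⬝ᵥ B *ᵥ (z - σ • u) = b + σ^2*(b*E) := by
      simp only [mulVec_sub, mulVec_smul, sub_dotProduct, dotProduct_sub, smul_dotProduct,
        dotProduct_smul, smul_eq_mul, hzBu, huBz, huBu, ← hb_def]
      ring
    have hAform : (z - σ • u) ⬝ᵥ A *ᵥ (z - σ • u)
        = a - 2*σ*E + σ^2*(u ⬝ᵥ A *ᵥ u) := by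
      simp only [mulVec_sub, mulVec_smul, sub_dotProduct, dotProduct_sub, smul_dotProduct,
        dotProduct_smul, smul_eq_mul, hzAu, huAz, ← ha_def]
      ring
    rw [hBform, hAform] at h1
    nlinarith [sq_nonneg σ, huA]
  have hkey : E ≤ (νmax - νmin) * a * b := by
    rcases eq_or_lt_of_le hE0 with hE | hE
    · nlinarith [hνab.1, hνab.2]
    · rcases eq_or_lt_of_le hνlt with hcase | hcase
      · exfalso
        have h := K ((a - νmin*b + 1)/(2*E))
        rw [← hcase] at h
        have h2 : 2*((a - νmin*b + 1)/(2*E))*E = a - νmin*b + 1 := by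
          field_simp
        linarith [h, h2]
      · have hpos : 0 < (νmax - νmin) * b := mul_pos (sub_pos.mpr hcase) hb
        set σ : ℝ := 1/((νmax - νmin)*b) with hσ_def
        have hσ : σ * ((νmax - νmin)*b) = 1 := by
          rw [hσ_def]; field_simp
        have hσpos : 0 < σ := by positivity
        have hid : σ^2*((νmax-νmin)*(b*E)) = (σ*((νmax-νmin)*b))*(σ*E) := by ring
        rw [hσ, one_mul] at hid
        have h3 : σ*E ≤ a - νmin*b := by
          have := K σ
          rw [hid] at this
          linarith
        have h4 : E = (σ*E)*((νmax-νmin)*b) := by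
          have : (σ*E)*((νmax-νmin)*b) = (σ*((νmax-νmin)*b))*E := by ring
          rw [this, hσ, one_mul]
        rw [h4]
        nlinarith [mul_pos hνmin hb, h3, hpos]
  have hmain : c - a^2/b ≤ (νmax - νmin) * a := by
    have hdiv : c - a^2/b = E/b := by
      rw [hE_def]; field_simp
    rw [hdiv, div_le_iff₀ hb]
    nlinarith [hkey]
  refine ⟨hmain, ?_, ?_⟩
  · -- part 2
    have hconv : ∀ α : ℝ, B⁻¹ *ᵥ ((A - α • B) *ᵥ z) = w - α • z := by
      intro α
      have hinv : B⁻¹ *ᵥ (B *ᵥ z) = z := by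
        rw [mulVec_mulVec, nonsing_inv_mul B hdet, one_mulVec]
      rw [sub_mulVec, smul_mulVec, mulVec_sub, mulVec_smul, hinv, ← hw_def]
    have hbdd : BddBelow (Set.range fun α : ℝ =>
        Real.sqrt ((B⁻¹ *ᵥ ((A - α • B) *ᵥ z)) ⬝ᵥ B *ᵥ (B⁻¹ *ᵥ ((A - α • B) *ᵥ z)))) := by
      refine ⟨0, ?_⟩
      rintro x ⟨α, rfl⟩
      exact Real.sqrt_nonneg _
    have hle := ciInf_le hbdd (a/b)
    refine hle.trans ?_
    rw [hconv, hq]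
    have hval : c - 2*(a/b)*a + (a/b)^2*b = c - a^2/b := by
      field_simp; ring
    rw [hval]
    calc Real.sqrt (c - a^2/b) ≤ Real.sqrt ((νmax - νmin) * a) := Real.sqrt_le_sqrt hmain
      _ = Real.sqrt (νmax - νmin) * Real.sqrt a :=
        Real.sqrt_mul (sub_nonneg.mpr hνlt) a
  · -- part 3
    have hlb : ∀ α : ℝ, c - a^2/b ≤ (w - α • z) ⬝ᵥ B *ᵥ (w - α • z) := by
      intro α
      rw [hq]
      have h5 : a^2/b * b = a^2 := div_mul_cancel₀ _ hb.ne'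
      nlinarith [sq_nonneg (α*b - a), hb, h5]
    have hbdd : BddBelow (Set.range fun α : ℝ => (w - α • z) ⬝ᵥ B *ᵥ (w - α • z)) := by
      refine ⟨c - a^2/b, ?_⟩
      rintro x ⟨α, rfl⟩
      exact hlb α
    apply le_antisymm
    · have hle := ciInf_le hbdd (a/b)
      rw [hq] at hle
      refine hle.trans_eq ?_
      field_simp; ring
    · exact le_ciInf hlb
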